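/- For all natural numbers n, m, ℓ with ℓ ≤ m and ℓ ≤ n - m, the identity Σ_{i=0}^{ℓ} C(n,i) · (-1)^{ℓ-i} · q^{C(ℓ-i,2)} · ([n-2i]_q/[n-i-ℓ]_q) · [n-i-ℓ choose m-ℓ]_q · [n-m-i choose ℓ-i]_q = [n-2ℓ choose m-ℓ]_q · Σ_{i=0}^{ℓ} C(n,i) · (-1)^{ℓ-i} · q^{C(ℓ-i,2)} · λ_q(n-2i, ℓ-i) holds in the field ℚ(q), where C(n,i) is the ordinary binomial coefficient, C(ℓ-i,2) = (ℓ-i)(ℓ-i-1)/2, and in the left-hand sum the term with i = ℓ and n = 2ℓ (where the ratio reads [0]_q/[0]_q) is interpreted as C(n,ℓ) · [n-2ℓ choose m-ℓ]_q, consistent with λ_q(0,0) = 1. -/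
import Mathlib


/- STATEMENT 19: the q-Weyl binomial identity (equivalence of (4.13) and (4.16)):
for ℓ ≤ m and ℓ ≤ n - m,
Σ_{i=0}^{ℓ} C(n,i)(-1)^{ℓ-i} q^{C(ℓ-i,2)} ([n-2i]_q/[n-i-ℓ]_q) [n-i-ℓ choose m-ℓ]_q [n-m-i choose ℓ-i]_q
  = [n-2ℓ choose m-ℓ]_q · Σ_{i=0}^{ℓ} C(n,i)(-1)^{ℓ-i} q^{C(ℓ-i,2)} λ_q(n-2i, ℓ-i),
where the term with n-2i = 0 (i.e. i = ℓ, n = 2ℓ) on the left is interpreted with the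
ratio [0]_q/[0]_q replaced by 1, consistently with λ_q(0,0) = 1. -/

noncomputable section

/-- The field `ℚ(q)` of rational functions in an indeterminate `q`. -/
abbrev F : Type := RatFunc ℚ

/-- The indeterminate `q`. -/
def q : F := RatFunc.X

/-- The q-integer `[n]_q = 1 + q + ⋯ + q^{n-1}`. -/
def qInt (n : ℕ) : F := ∑ i ∈ Finset.range n, q ^ i

/-- The q-factorial `[n]_q! = ∏_{k=1}^n [k]_q`. -/
def qFact (n : ℕ) : F := ∏ k ∈ Finset.range n, qInt (k + 1)

/-- The q-binomial coefficient `[n choose k]_q = [n]_q!/([k]_q! [n-k]_q!)`. -/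
def qBinom (n k : ℕ) : F := qFact n / (qFact k * qFact (n - k))

/-- The q-Lucas coefficient `λ_q(n,k) = ([n]_q/[n-k]_q)·[n-k choose k]_q` for `n ≥ 1`,
with `λ_q(0,0) = 1`. -/
def lam (n k : ℕ) : F :=
  if n = 0 ∧ k = 0 then 1 else qInt n / qInt (n - k) * qBinom (n - k) k

lemma qInt_ne_zero {n : ℕ} (h : n ≠ 0) : qInt n ≠ 0 := by
  have h1 : qInt n = algebraMap (Polynomial ℚ) F (∑ i ∈ Finset.range n, Polynomial.X ^ i) := by
    simp [qInt, q, map_sum, map_pow, RatFunc.algebraMap_X]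
  rw [h1]
  apply RatFunc.algebraMap_ne_zero
  intro hp
  have h2 := congrArg (Polynomial.eval 1) hp
  simp [Polynomial.eval_finset_sum] at h2
  exact h h2

lemma qFact_ne_zero (n : ℕ) : qFact n ≠ 0 := by
  apply Finset.prod_ne_zero_iff.mpr
  intro k _
  exact qInt_ne_zero (Nat.succ_ne_zero k)

lemma qBinom_zero_right (r : ℕ) : qBinom r 0 = 1 := by
  unfold qBinom
  rw [show qFact 0 = 1 from Finset.prod_range_zero _, Nat.sub_zero, one_mul,
    div_self (qFact_ne_zero r)]

theorem qWeyl_identity (n m ℓ : ℕ) (h₁ : ℓ ≤ m) (h₂ : ℓ ≤ n - m) :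
    ∑ i ∈ Finset.range (ℓ + 1),
        (n.choose i : F) * (-1) ^ (ℓ - i) * q ^ (ℓ - i).choose 2 *
          (if n - 2 * i = 0 then 1 else qInt (n - 2 * i) / qInt (n - i - ℓ)) *
          qBinom (n - i - ℓ) (m - ℓ) * qBinom (n - m - i) (ℓ - i) =
      qBinom (n - 2 * ℓ) (m - ℓ) *
        ∑ i ∈ Finset.range (ℓ + 1),
          (n.choose i : F) * (-1) ^ (ℓ - i) * q ^ (ℓ - i).choose 2 *
            lam (n - 2 * i) (ℓ - i) := by
  rw [Finset.mul_sum]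
  apply Finset.sum_congr rfl
  intro i hi
  rw [Finset.mem_range] at hi
  have hil : i ≤ ℓ := Nat.lt_succ_iff.mp hi
  set C : F := (n.choose i : F) * (-1) ^ (ℓ - i) * q ^ (ℓ - i).choose 2 with hC
  rcases Nat.eq_zero_or_pos ℓ with rfl | hℓ
  · -- ℓ = 0, so i = 0
    interval_cases i
    simp only [Nat.sub_zero, Nat.mul_zero, qBinom_zero_right, lam]
    rcases Nat.eq_zero_or_pos n with rfl | hn
    · simp [mul_comm]
    · rw [if_neg (by omega), if_neg (by omega)]
      ring
  · -- main case: m + ℓ ≤ n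
    have hmn : m + ℓ ≤ n := by omega
    by_cases hz : n - 2 * i = 0
    · rw [if_pos hz]
      have l1 : lam (n - 2 * i) (ℓ - i) = 1 := by
        have e1 : n - 2 * i = 0 := hz
        have e2 : ℓ - i = 0 := by omega
        simp [lam, e1, e2]
      have b1 : qBinom (n - m - i) (ℓ - i) = 1 := by
        rw [show ℓ - i = 0 by omega, qBinom_zero_right]
      have b2 : qBinom (n - i - ℓ) (m - ℓ) = qBinom (n - 2 * ℓ) (m - ℓ) := by
        rw [show n - i - ℓ = n - 2 * ℓ by omega]
      rw [l1, b1, b2]; ring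
    · rw [if_neg hz]
      have hlam : lam (n - 2 * i) (ℓ - i) =
          qInt (n - 2 * i) / qInt (n - i - ℓ) * qBinom (n - i - ℓ) (ℓ - i) := by
        unfold lam
        rw [if_neg (fun h => hz h.1),
          show n - 2 * i - (ℓ - i) = n - i - ℓ from by omega]
      rw [hlam]
      have hne : ∀ a b c d : ℕ, qFact a * qFact b * (qFact c * qFact d) ≠ 0 := by
        intro a b c d
        exact mul_ne_zero (mul_ne_zero (qFact_ne_zero a) (qFact_ne_zero b))
          (mul_ne_zero (qFact_ne_zero c) (qFact_ne_zero d))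
      have key : qBinom (n - i - ℓ) (m - ℓ) * qBinom (n - m - i) (ℓ - i)
          = qBinom (n - 2 * ℓ) (m - ℓ) * qBinom (n - i - ℓ) (ℓ - i) := by
        unfold qBinom
        have e1 : n - i - ℓ - (m - ℓ) = n - m - i := by omega
        have e2 : n - m - i - (ℓ - i) = n - m - ℓ := by omega
        have e3 : n - 2 * ℓ - (m - ℓ) = n - m - ℓ := by omega
        have e4 : n - i - ℓ - (ℓ - i) = n - 2 * ℓ := by omega
        rw [e1, e2, e3, e4, div_mul_div_comm, div_mul_div_comm,
          div_eq_div_iff (hne _ _ _ _) (hne _ _ _ _)]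
        ring
      linear_combination (C * (qInt (n - 2 * i) / qInt (n - i - ℓ))) * key
end
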